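/- Odd companion to Warnaar's transformation: for all natural numbers L and integers a, Σ_{k≥0} O_{L,k}(q) [2k+1 choose k-a]_q = q^(2a²+2a) [2L choose L-2a-1]_q, where O_{L,k}(q) = Σ_{m=0}^{L} q^((m+k)(m+k+1)+k(k+1)) [L choose m]_q [L-m choose 2k+1]_q. -/

import Mathlib

open LaurentPolynomial Finset

noncomputable section

/-- Gaussian binomial coefficient with natural indices, in base `x`, defined by the
`q`-Pascal recurrence `[n+1, k+1] = [n, k] + x^(k+1) * [n, k+1]`.  It vanishes for `k > n`. -/
def gaussAux (x : LaurentPolynomial ℤ) : ℕ → ℕ → LaurentPolynomial ℤ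
  | _, 0 => 1
  | 0, _ + 1 => 0
  | n + 1, k + 1 => gaussAux x n k + x ^ (k + 1) * gaussAux x n (k + 1)

/-- The Gaussian binomial coefficient `[n choose k]` in base `x`, for integer indices:
it is zero when `n < 0` or `k < 0` (and, by `gaussAux`, also when `k > n`). -/
def qbin (x : LaurentPolynomial ℤ) (n k : ℤ) : LaurentPolynomial ℤ :=
  if 0 ≤ n ∧ 0 ≤ k then gaussAux x n.toNat k.toNat else 0

/-- `(-1)^j` for an integer `j`, as a Laurent polynomial. -/
def m1 (j : ℤ) : LaurentPolynomial ℤ := ((((-1 : ℤˣ) ^ j : ℤˣ) : ℤ) : LaurentPolynomial ℤ)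

namespace Aux

abbrev qq : LaurentPolynomial ℤ := T 1

lemma Tpow (n : ℕ) : (T 1 : LaurentPolynomial ℤ) ^ n = T (n : ℤ) := by
  rw [T_pow]; norm_num

lemma Tmul (a b : ℤ) : (T a : LaurentPolynomial ℤ) * T b = T (a + b) := (T_add a b).symm

lemma Tmul' (a b c : ℤ) (h : a + b = c) : (T a : LaurentPolynomial ℤ) * T b = T c := by
  rw [Tmul, h]

lemma g_rec (x : LaurentPolynomial ℤ) (n k : ℕ) :
    gaussAux x (n + 1) (k + 1) = gaussAux x n k + x ^ (k + 1) * gaussAux x n (k + 1) := rfl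

lemma g_zero (x : LaurentPolynomial ℤ) (n : ℕ) : gaussAux x n 0 = 1 := by cases n <;> rfl

lemma g_of_lt (x : LaurentPolynomial ℤ) : ∀ {n k : ℕ}, n < k → gaussAux x n k = 0 := by
  intro n
  induction n with
  | zero => intro k h; match k, h with | k + 1, _ => rfl
  | succ n ih =>
    intro k h
    match k, h with
    | k + 1, h =>
      rw [g_rec, ih (by omega), ih (by omega)]
      ring

lemma g_self (x : LaurentPolynomial ℤ) (n : ℕ) : gaussAux x n n = 1 := by
  induction n with
  | zero => rfl
  | succ n ih => rw [g_rec, ih, g_of_lt x (by omega)]; ring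

lemma g_rec' (N K : ℕ) :
    gaussAux qq (N + 1) (K + 1) = T ((N : ℤ) - K) * gaussAux qq N K + gaussAux qq N (K + 1) := by
  induction N generalizing K with
  | zero =>
    cases K with
    | zero =>
      rw [g_rec, g_zero, g_of_lt qq (n := 0) (k := 1) (by omega)]
      norm_num [T_zero]
    | succ K =>
      rw [g_rec, g_of_lt qq (n := 0) (k := K + 1) (by omega),
        g_of_lt qq (n := 0) (k := K + 2) (by omega)]
      ring
  | succ N ih =>
    cases K with
    | zero =>
      conv_lhs => rw [g_rec, ih 0]
      conv_rhs => rw [g_rec]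
      simp only [Tpow, g_zero]
      push_cast
      simp only [sub_zero]
      have h1 : (T (1:ℤ) : LaurentPolynomial ℤ) * T ((N:ℤ)) = T ((N:ℤ) + 1) :=
        Tmul' _ _ _ (by ring)
      linear_combination h1
    | succ K =>
      conv_lhs => rw [g_rec, ih K, ih (K + 1)]
      conv_rhs => rw [g_rec, g_rec]
      simp only [Tpow]
      push_cast
      rw [show ((N:ℤ) + 1 - ((K:ℤ) + 1)) = (N:ℤ) - K from by ring]
      have h1 : (T ((K:ℤ) + 1 + 1) : LaurentPolynomial ℤ) * T ((N:ℤ) - ((K:ℤ) + 1)) =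
          T ((N:ℤ) + 1) := Tmul' _ _ _ (by ring)
      have h2 : (T ((N:ℤ) - K) : LaurentPolynomial ℤ) * T ((K:ℤ) + 1) =
          T ((N:ℤ) + 1) := Tmul' _ _ _ (by ring)
      linear_combination h1 * gaussAux qq N (K + 1) - h2 * gaussAux qq N (K + 1)

lemma g_symm (n : ℕ) : ∀ k : ℕ, k ≤ n → gaussAux qq n k = gaussAux qq n (n - k) := by
  induction n with
  | zero => intro k h; interval_cases k; rfl
  | succ n ih =>
    intro k h
    cases k with
    | zero => rw [g_zero, Nat.sub_zero, g_self]
    | succ K =>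
      rcases Nat.lt_or_ge K n with hK | hK
      · have hsub : n + 1 - (K + 1) = (n - K - 1) + 1 := by omega
        have e1 : n - K - 1 + 1 = n - K := by omega
        have e3 : n - K - 1 = n - (K + 1) := by omega
        rw [g_rec', hsub, g_rec, e1, ← ih K (by omega), e3, ← ih (K + 1) (by omega)]
        have e2 : ((n : ℤ) - K) = ((n - K : ℕ) : ℤ) := by omega
        rw [e2, Tpow]
        ring
      · have hK' : K = n := by omega
        subst hK'
        rw [g_self, Nat.sub_self, g_zero]


lemma T_apply (i a : ℤ) : (T i : LaurentPolynomial ℤ).coeff a = if i = a then 1 else 0 := by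
  exact LaurentPolynomial.T_apply a i

/-- the `q`-analogue `[m] = 1 + q + ... + q^(m-1)`. -/
def geom (m : ℕ) : LaurentPolynomial ℤ := ∑ i ∈ range m, T (i : ℤ)

lemma geom_ne_zero (m : ℕ) (h : 0 < m) : geom m ≠ 0 := by
  intro hc
  have h1 : (geom m).coeff 0 = 1 := by
    rw [geom, AddMonoidAlgebra.coeff_sum, Finset.sum_apply']
    rw [Finset.sum_eq_single 0]
    · rw [T_apply]; norm_num
    · intro b _ hb
      rw [T_apply, if_neg (by exact_mod_cast hb)]
    · intro hmem; exact absurd (Finset.mem_range.2 h) hmem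
  rw [hc] at h1
  simp at h1

lemma geom_split (a b : ℕ) : geom (a + b) = geom a + T (a : ℤ) * geom b := by
  rw [geom, geom, geom, Finset.sum_range_add, Finset.mul_sum]
  have h : ∀ i ∈ range b, (T (((a + i : ℕ)) : ℤ) : LaurentPolynomial ℤ) = T (a : ℤ) * T (i : ℤ) := by
    intro i _
    rw [Tmul]
    norm_cast
  rw [Finset.sum_congr rfl h]

/-- the `q`-factorial. -/
def qf : ℕ → LaurentPolynomial ℤ
  | 0 => 1
  | n + 1 => qf n * geom (n + 1)

lemma qf_ne_zero (n : ℕ) : qf n ≠ 0 := by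
  induction n with
  | zero => exact one_ne_zero
  | succ n ih => exact mul_ne_zero ih (geom_ne_zero _ (by omega))

lemma g_mul_qf : ∀ n k : ℕ, k ≤ n → gaussAux qq n k * (qf k * qf (n - k)) = qf n := by
  intro n
  induction n with
  | zero => intro k h; interval_cases k; simp [g_zero, qf]
  | succ n ih =>
    intro k h
    cases k with
    | zero => simp [g_zero, qf]
    | succ K =>
      rcases Nat.lt_or_ge K n with hK | hK
      · have e1 : n + 1 - (K + 1) = (n - (K + 1)) + 1 := by omega
        have e2 : n - (K + 1) + 1 = n - K := by omega
        rw [g_rec, e1, Tpow]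
        have ih1 := ih K (by omega)
        have ih2 := ih (K + 1) (by omega)
        rw [show n - K = (n - (K + 1)) + 1 from by omega,
          show qf (n - (K + 1) + 1) = qf (n - (K+1)) * geom (n - (K+1) + 1) from rfl, e2] at ih1
        rw [show qf (K + 1) = qf K * geom (K + 1) from rfl] at ih2
        have hsplit : geom (n + 1) = geom (K + 1) + T (((K + 1 : ℕ)) : ℤ) * geom (n - K) := by
          have h' : n + 1 = (K + 1) + (n - K) := by omega
          rw [h', geom_split]
        rw [show qf (n - (K + 1) + 1) = qf (n - (K+1)) * geom (n - (K+1) + 1) from rfl,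
          show qf (K + 1) = qf K * geom (K + 1) from rfl,
          show qf (n + 1) = qf n * geom (n + 1) from rfl, e2, hsplit]
        linear_combination (geom (K + 1)) * ih1
          + (T (((K + 1 : ℕ)) : ℤ) * geom (n - K)) * ih2
      · have hK' : K = n := by omega
        subst hK'
        rw [g_self, Nat.sub_self]
        rw [show qf 0 = 1 from rfl]
        ring

lemma g_mul_g (n k j : ℕ) (hj : j ≤ k) (hk : k ≤ n) :
    gaussAux qq n k * gaussAux qq k j = gaussAux qq n j * gaussAux qq (n - j) (k - j) := by
  apply mul_left_cancel₀ (b := gaussAux qq n k * gaussAux qq k j)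
    (mul_ne_zero (mul_ne_zero (qf_ne_zero j) (qf_ne_zero (k - j))) (qf_ne_zero (n - k)))
  have h1 := g_mul_qf k j hj
  have h2 := g_mul_qf n k hk
  have h3 := g_mul_qf (n - j) (k - j) (by omega)
  rw [show n - j - (k - j) = n - k from by omega] at h3
  have h4 := g_mul_qf n j (le_trans hj hk)
  linear_combination (qf (n - k) * gaussAux qq n k) * h1 + h2
    - (qf j * gaussAux qq n j) * h3 - h4

lemma qbin_cast (x : LaurentPolynomial ℤ) (n k : ℕ) :
    qbin x (n : ℤ) (k : ℤ) = gaussAux x n k := by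
  rw [qbin, if_pos (by omega)]
  simp

lemma qbin_neg_left (x : LaurentPolynomial ℤ) {n k : ℤ} (h : n < 0) : qbin x n k = 0 := by
  rw [qbin, if_neg (by omega)]

lemma qbin_neg_right (x : LaurentPolynomial ℤ) {n k : ℤ} (h : k < 0) : qbin x n k = 0 := by
  rw [qbin, if_neg (by omega)]

lemma qbin_of_lt (x : LaurentPolynomial ℤ) {n k : ℤ} (h : n < k) : qbin x n k = 0 := by
  rw [qbin]
  split_ifs with hc
  · exact g_of_lt x (by omega)
  · rfl

lemma qbin_mul_qbin (n r s : ℤ) :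
    qbin qq n r * qbin qq r s = qbin qq n s * qbin qq (n - s) (r - s) := by
  by_cases hs : 0 ≤ s
  · by_cases hr : s ≤ r
    · by_cases hn : r ≤ n
      · rw [qbin, if_pos (by omega), qbin, if_pos (by omega), qbin, if_pos (by omega),
          qbin, if_pos (by omega)]
        rw [show (n - s).toNat = n.toNat - s.toNat from by omega,
          show (r - s).toNat = r.toNat - s.toNat from by omega]
        exact g_mul_g n.toNat r.toNat s.toNat (by omega) (by omega)
      · rw [qbin_of_lt qq (show n < r from by omega),
          qbin_of_lt qq (show n - s < r - s from by omega)]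
        ring
    · rw [qbin_of_lt qq (show r < s from by omega),
        qbin_neg_right qq (show r - s < 0 from by omega)]
      ring
  · rw [qbin_neg_right qq (show s < 0 from by omega),
      qbin_neg_right qq (show s < 0 from by omega)]
    ring

lemma qbin_symm (L : ℕ) (t u : ℤ) (h : t + u = L) : qbin qq L t = qbin qq L u := by
  rcases lt_or_ge t 0 with ht | ht
  · rw [qbin_neg_right qq ht, qbin_of_lt qq (show (L:ℤ) < u from by omega)]
  rcases lt_or_ge u 0 with hu | hu
  · rw [qbin_neg_right qq hu, qbin_of_lt qq (show (L:ℤ) < t from by omega)]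
  rw [qbin, if_pos (by omega), qbin, if_pos (by omega)]
  rw [show (L:ℤ).toNat = L from by omega]
  rw [g_symm L t.toNat (by omega), show L - t.toNat = u.toNat from by omega]

lemma gVan (x : ℕ) : ∀ y r : ℕ, gaussAux qq (x + y) r =
    ∑ m ∈ range (r + 1),
      T (((x:ℤ) - m) * ((r:ℤ) - m)) * gaussAux qq x m * gaussAux qq y (r - m) := by
  induction x with
  | zero =>
    intro y r
    rw [Finset.sum_range_succ']
    rw [Finset.sum_eq_zero (fun i _ => by
      rw [g_of_lt qq (show (0:ℕ) < i + 1 from by omega)]; ring)]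
    rw [g_zero]
    norm_num [T_zero]
  | succ x ih =>
    intro y r
    cases r with
    | zero =>
      rw [Finset.sum_range_one, g_zero, g_zero, g_zero]
      norm_num [T_zero]
    | succ r =>
      have hL : gaussAux qq (x + 1 + y) (r + 1)
          = gaussAux qq (x + y) r + T ((r:ℤ) + 1) * gaussAux qq (x + y) (r + 1) := by
        rw [show x + 1 + y = (x + y) + 1 from by omega, g_rec, Tpow]
        norm_cast
      rw [hL, Finset.sum_range_succ']
      have key : ∀ i ∈ range (r + 1),
          T ((((x+1:ℕ):ℤ) - ((i+1:ℕ):ℤ)) * (((r+1:ℕ):ℤ) - ((i+1:ℕ):ℤ)))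
              * gaussAux qq (x+1) (i+1) * gaussAux qq y (r + 1 - (i+1))
          = T (((x:ℤ) - i) * ((r:ℤ) - i)) * gaussAux qq x i * gaussAux qq y (r - i)
            + T ((((x:ℤ) - 1 - i) * (((r+1:ℕ):ℤ) - 1 - i)) + ((r:ℤ) + 1))
              * gaussAux qq x (i+1) * gaussAux qq y (r - i) := by
        intro i _
        rw [show r + 1 - (i + 1) = r - i from by omega, g_rec, Tpow]
        have t0 : (T ((((x+1:ℕ):ℤ) - ((i+1:ℕ):ℤ)) * (((r+1:ℕ):ℤ) - ((i+1:ℕ):ℤ)))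
            : LaurentPolynomial ℤ) = T (((x:ℤ) - i) * ((r:ℤ) - i)) := by
          congr 1
          push_cast
          ring
        have t1 : (T ((((x:ℤ)) - i) * ((r:ℤ) - i)) : LaurentPolynomial ℤ) * T (((i+1:ℕ):ℤ))
            = T ((((x:ℤ) - 1 - i) * (((r+1:ℕ):ℤ) - 1 - i)) + ((r:ℤ) + 1)) := by
          rw [Tmul]
          congr 1
          push_cast
          ring
        rw [t0]
        linear_combination (gaussAux qq x (i+1) * gaussAux qq y (r - i)) * t1
      rw [Finset.sum_congr rfl key, Finset.sum_add_distrib, ← ih y r]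
      -- now handle the T(r+1) * (ih y (r+1)) part
      have hsplit : T ((r:ℤ) + 1) * gaussAux qq (x + y) (r + 1)
          = (∑ i ∈ range (r + 1),
              T ((((x:ℤ) - 1 - i) * (((r+1:ℕ):ℤ) - 1 - i)) + ((r:ℤ) + 1))
                * gaussAux qq x (i+1) * gaussAux qq y (r - i))
            + T ((((x+1:ℕ):ℤ) - ((0:ℕ):ℤ)) * (((r+1:ℕ):ℤ) - ((0:ℕ):ℤ)))
                * gaussAux qq (x+1) 0 * gaussAux qq y (r + 1 - 0) := by
        rw [ih y (r + 1), Finset.mul_sum, Finset.sum_range_succ']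
        have key2 : ∀ i ∈ range (r + 1),
            T ((r:ℤ) + 1) * (T (((x:ℤ) - ((i+1:ℕ):ℤ)) * (((r+1:ℕ):ℤ) - ((i+1:ℕ):ℤ)))
              * gaussAux qq x (i+1) * gaussAux qq y (r + 1 - (i+1)))
            = T ((((x:ℤ) - 1 - i) * (((r+1:ℕ):ℤ) - 1 - i)) + ((r:ℤ) + 1))
              * gaussAux qq x (i+1) * gaussAux qq y (r - i) := by
          intro i _
          rw [show r + 1 - (i + 1) = r - i from by omega]
          have t2 : (T ((r:ℤ) + 1) : LaurentPolynomial ℤ)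
              * T (((x:ℤ) - ((i+1:ℕ):ℤ)) * (((r+1:ℕ):ℤ) - ((i+1:ℕ):ℤ)))
              = T ((((x:ℤ) - 1 - i) * (((r+1:ℕ):ℤ) - 1 - i)) + ((r:ℤ) + 1)) := by
            rw [Tmul]
            congr 1
            push_cast
            ring
          linear_combination (gaussAux qq x (i+1) * gaussAux qq y (r - i)) * t2
        rw [Finset.sum_congr rfl key2]
        have t3 : (T ((r:ℤ) + 1) : LaurentPolynomial ℤ)
            * (T (((x:ℤ) - ((0:ℕ):ℤ)) * (((r+1:ℕ):ℤ) - ((0:ℕ):ℤ)))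
              * gaussAux qq x 0 * gaussAux qq y (r + 1 - 0))
            = T ((((x+1:ℕ):ℤ) - ((0:ℕ):ℤ)) * (((r+1:ℕ):ℤ) - ((0:ℕ):ℤ)))
              * gaussAux qq (x+1) 0 * gaussAux qq y (r + 1 - 0) := by
          rw [g_zero, g_zero]
          have t4 : (T ((r:ℤ) + 1) : LaurentPolynomial ℤ)
              * T (((x:ℤ) - ((0:ℕ):ℤ)) * (((r+1:ℕ):ℤ) - ((0:ℕ):ℤ)))
              = T ((((x+1:ℕ):ℤ) - ((0:ℕ):ℤ)) * (((r+1:ℕ):ℤ) - ((0:ℕ):ℤ))) := by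
            rw [Tmul]
            congr 1
            push_cast
            ring
          linear_combination (gaussAux qq y (r + 1 - 0)) * t4
        rw [t3]
      rw [hsplit]
      ring

lemma sum_Icc_int {M : Type*} [AddCommMonoid M] (n : ℕ) (h : ℤ → M) :
    ∑ j ∈ Finset.Icc (0:ℤ) (n:ℤ), h j = ∑ i ∈ Finset.range (n + 1), h (i:ℤ) := by
  refine Finset.sum_nbij' (fun j => j.toNat) (fun i => (i : ℤ)) ?_ ?_ ?_ ?_ ?_
  · intro a ha
    simp only [Finset.mem_Icc] at ha
    simp only [Finset.mem_range]
    omega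
  · intro a ha
    simp only [Finset.mem_range] at ha
    simp only [Finset.mem_Icc]
    omega
  · intro a ha
    simp only [Finset.mem_Icc] at ha
    omega
  · intro a _
    omega
  · intro a ha
    simp only [Finset.mem_Icc] at ha
    rw [Int.toNat_of_nonneg ha.1]

lemma sum_Icc_ext {M : Type*} [AddCommMonoid M] (b₁ b₂ : ℤ) (h : ℤ → M)
    (H : ∀ j, 0 ≤ j → b₂ < j ∨ b₁ < j → h j = 0) :
    ∑ j ∈ Finset.Icc (0:ℤ) b₁, h j = ∑ j ∈ Finset.Icc (0:ℤ) b₂, h j := by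
  have s1 : ∑ j ∈ Finset.Icc (0:ℤ) b₁, h j = ∑ j ∈ Finset.Icc (0:ℤ) (max b₁ b₂), h j := by
    apply Finset.sum_subset (Finset.Icc_subset_Icc le_rfl (le_max_left _ _))
    intro j hj hnj
    simp only [Finset.mem_Icc] at hj hnj
    exact H j hj.1 (Or.inr (by omega))
  have s2 : ∑ j ∈ Finset.Icc (0:ℤ) b₂, h j = ∑ j ∈ Finset.Icc (0:ℤ) (max b₁ b₂), h j := by
    apply Finset.sum_subset (Finset.Icc_subset_Icc le_rfl (le_max_right _ _))
    intro j hj hnj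
    simp only [Finset.mem_Icc] at hj hnj
    exact H j hj.1 (Or.inl (by omega))
  rw [s1, s2]

lemma sum_Icc_reflect {M : Type*} [AddCommMonoid M] (r : ℤ) (h : ℤ → M) :
    ∑ j ∈ Finset.Icc (0:ℤ) r, h j = ∑ j ∈ Finset.Icc (0:ℤ) r, h (r - j) := by
  refine Finset.sum_nbij' (fun j => r - j) (fun j => r - j) ?_ ?_ ?_ ?_ ?_
  · intro a ha; simp only [Finset.mem_Icc] at *; omega
  · intro a ha; simp only [Finset.mem_Icc] at *; omega
  · intro a _; omega
  · intro a _; omega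
  · intro a _; rw [show r - (r - a) = a from by omega]

lemma gVanq (x y : ℕ) (r b : ℤ) (hb : (x:ℤ) ≤ b ∨ r ≤ b) :
    qbin qq ((x:ℤ) + (y:ℤ)) r
      = ∑ m ∈ Finset.Icc (0:ℤ) b, T (((x:ℤ) - m) * (r - m)) * qbin qq x m * qbin qq y (r - m) := by
  rcases lt_or_ge r 0 with hr | hr
  · rw [qbin_neg_right qq hr, Finset.sum_eq_zero]
    intro m hm
    simp only [Finset.mem_Icc] at hm
    rw [qbin_neg_right qq (show r - m < 0 from by omega)]
    ring
  · have step1 : ∑ m ∈ Finset.Icc (0:ℤ) b, T (((x:ℤ) - m) * (r - m)) * qbin qq x m * qbin qq y (r - m)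
        = ∑ m ∈ Finset.Icc (0:ℤ) r, T (((x:ℤ) - m) * (r - m)) * qbin qq x m * qbin qq y (r - m) := by
      apply sum_Icc_ext
      intro j hj hcase
      rcases hcase with hc | hc
      · rw [qbin_neg_right qq (show r - j < 0 from by omega)]; ring
      · rcases hb with hbx | hbr
        · rw [qbin_of_lt qq (show (x:ℤ) < j from by omega)]; ring
        · rw [qbin_neg_right qq (show r - j < 0 from by omega)]; ring
    rw [step1, show r = ((r.toNat : ℕ) : ℤ) from by omega, sum_Icc_int]
    rw [show (x:ℤ) + (y:ℤ) = (((x + y : ℕ)) : ℤ) from by push_cast; ring, qbin_cast, gVan x y r.toNat]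
    apply Finset.sum_congr rfl
    intro i hi
    simp only [Finset.mem_range] at hi
    rw [qbin_cast, show ((r.toNat:ℤ) - (i:ℤ)) = (((r.toNat - i : ℕ)):ℤ) from by omega, qbin_cast]

/-- The summand of the double sum, as a function of integer indices. -/
def tI (L : ℕ) (a m k : ℤ) : LaurentPolynomial ℤ :=
  T ((m + k) * (m + k + 1) + k * (k + 1)) * qbin qq L m * qbin qq ((L:ℤ) - m) (2*k+1)
    * qbin qq (2*k+1) (k - a)

/-- The transformed summand. -/
def fI (L : ℕ) (a s m : ℤ) : LaurentPolynomial ℤ :=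
  T (s*(s+2*a+1) + 2*a*a + 2*a + (s - m)*(s + 2*a + 1 - m)) * qbin qq L s * qbin qq s m
    * qbin qq ((L:ℤ) - s) (s + 2*a + 1 - m)

lemma key (L : ℕ) (a m k : ℤ) : tI L a m k = fI L a (m + k - a) m := by
  unfold tI fI
  have e1 := qbin_mul_qbin ((L:ℤ) - m) (2*k+1) (k - a)
  rw [show (L:ℤ) - m - (k - a) = (L:ℤ) - (m + k - a) from by ring,
      show 2*k+1 - (k - a) = (m + k - a) + 2*a + 1 - m from by ring] at e1
  have e2 := qbin_mul_qbin (L:ℤ) (m + k - a) m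
  rw [show (m + k - a) - m = k - a from by ring] at e2
  have tEq : (T ((m + k) * (m + k + 1) + k * (k + 1)) : LaurentPolynomial ℤ)
      = T ((m + k - a)*((m + k - a)+2*a+1) + 2*a*a + 2*a
          + ((m + k - a) - m)*((m + k - a) + 2*a + 1 - m)) := by
    congr 1
    ring
  linear_combination (T ((m + k) * (m + k + 1) + k * (k + 1)) * qbin qq L m) * e1
    - (T ((m + k - a)*((m + k - a)+2*a+1) + 2*a*a + 2*a
          + ((m + k - a) - m)*((m + k - a) + 2*a + 1 - m))
        * qbin qq ((L:ℤ) - (m + k - a)) ((m + k - a) + 2*a + 1 - m)) * e2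
    + (qbin qq L m * qbin qq ((L:ℤ) - m) (k - a)
        * qbin qq ((L:ℤ) - (m + k - a)) ((m + k - a) + 2*a + 1 - m)) * tEq

lemma tI_zero_left (L : ℕ) (a m k : ℤ) (hm : 0 ≤ m) (hk : k < 0 ∨ (L:ℤ) < k) : tI L a m k = 0 := by
  unfold tI
  rcases hk with hk | hk
  · rw [qbin_neg_left qq (show 2*k+1 < 0 from by omega)]; ring
  · rw [qbin_of_lt qq (show (L:ℤ) - m < 2*k+1 from by omega)]; ring

lemma fI_zero (L : ℕ) (a s m : ℤ) (hs : s < 0 ∨ (L:ℤ) < s) : fI L a s m = 0 := by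
  unfold fI
  rcases hs with hs | hs
  · rw [qbin_neg_right qq hs]; ring
  · rw [qbin_of_lt qq hs]; ring

lemma stepC (L : ℕ) (a : ℤ) (m : ℕ) :
    ∑ k ∈ range (L + 1), tI L a m k = ∑ s ∈ Finset.Icc (0:ℤ) (L:ℤ), fI L a s m := by
  have h1 : ∑ k ∈ range (L + 1), tI L a m k = ∑ j ∈ Finset.Icc (0:ℤ) (L:ℤ), tI L a m j :=
    (sum_Icc_int L (fun j => tI L a m j)).symm
  have h2 : ∑ j ∈ Finset.Icc (0:ℤ) (L:ℤ), tI L a m j = ∑ᶠ j : ℤ, tI L a m j := by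
    refine (finsum_eq_sum_of_support_subset _ ?_).symm
    intro j hj
    simp only [Function.mem_support] at hj
    simp only [Finset.coe_Icc, Set.mem_Icc]
    by_contra hc
    exact hj (tI_zero_left L a m j (by exact_mod_cast Nat.cast_nonneg m) (by omega))
  have h3 : ∑ᶠ j : ℤ, tI L a m j = ∑ᶠ s : ℤ, tI L a m (s + (a - m)) := by
    exact (finsum_comp_equiv (Equiv.addRight (a - (m:ℤ)))).symm
  have h4 : ∀ s : ℤ, tI L a m (s + (a - m)) = fI L a s m := by
    intro s
    rw [key, show (m:ℤ) + (s + (a - m)) - a = s from by ring]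
  have h5 : ∑ᶠ s : ℤ, fI L a s m = ∑ s ∈ Finset.Icc (0:ℤ) (L:ℤ), fI L a s m := by
    refine finsum_eq_sum_of_support_subset _ ?_
    intro s hs
    simp only [Function.mem_support] at hs
    simp only [Finset.coe_Icc, Set.mem_Icc]
    by_contra hc
    exact hs (fI_zero L a s m (by omega))
  rw [h1, h2, h3]
  rw [finsum_congr h4, h5]

lemma stepE (L : ℕ) (a s : ℤ) (hs0 : 0 ≤ s) (hsL : s ≤ (L:ℤ)) :
    ∑ m ∈ Finset.Icc (0:ℤ) (L:ℤ), fI L a s m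
      = T (s*(s+2*a+1) + 2*a*a + 2*a) * (qbin qq L s * qbin qq L (s+2*a+1)) := by
  have hterm : ∀ m ∈ Finset.Icc (0:ℤ) (L:ℤ), fI L a s m
      = (T (s*(s+2*a+1) + 2*a*a + 2*a) * qbin qq L s)
        * (T ((s - m)*(s + 2*a + 1 - m)) * qbin qq s m * qbin qq ((L:ℤ) - s) (s + 2*a + 1 - m)) := by
    intro m _
    unfold fI
    rw [show (s*(s+2*a+1) + 2*a*a + 2*a + (s - m)*(s + 2*a + 1 - m))
        = (s*(s+2*a+1) + 2*a*a + 2*a) + ((s - m)*(s + 2*a + 1 - m)) from by ring, ← Tmul]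
    ring
  rw [Finset.sum_congr rfl hterm, ← Finset.mul_sum]
  have hV := gVanq s.toNat (L - s.toNat) (s + 2*a + 1) (L:ℤ) (Or.inl (by omega))
  rw [show ((s.toNat:ℕ):ℤ) = s from by omega, show (((L - s.toNat:ℕ)):ℤ) = (L:ℤ) - s from by omega,
    show s + ((L:ℤ) - s) = (L:ℤ) from by ring] at hV
  rw [← hV]
  ring

theorem main (L : ℕ) (a : ℤ) :
    (∑ᶠ k : ℕ,
        (∑ m ∈ Finset.range (L + 1),
            T (((m : ℤ) + k) * ((m : ℤ) + k + 1) + (k : ℤ) * ((k : ℤ) + 1)) *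
              qbin (T 1) L m * qbin (T 1) ((L : ℤ) - m) (2 * k + 1)) *
          qbin (T 1) (2 * (k : ℤ) + 1) ((k : ℤ) - a)) =
      T (2 * a ^ 2 + 2 * a) * qbin (T 1) (2 * L) ((L : ℤ) - 2 * a - 1) := by
  have hAk : ∀ k : ℕ,
      (∑ m ∈ Finset.range (L + 1),
            T (((m : ℤ) + k) * ((m : ℤ) + k + 1) + (k : ℤ) * ((k : ℤ) + 1)) *
              qbin (T 1) L m * qbin (T 1) ((L : ℤ) - m) (2 * k + 1)) *
          qbin (T 1) (2 * (k : ℤ) + 1) ((k : ℤ) - a)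
        = ∑ m ∈ Finset.range (L + 1), tI L a m k := by
    intro k
    rw [Finset.sum_mul]
    exact Finset.sum_congr rfl (fun m _ => rfl)
  -- convert the finsum to a finite sum over range (L+1)
  rw [finsum_congr hAk]
  have hsupp : ∀ k : ℕ, k ∉ Finset.range (L + 1) → ∑ m ∈ Finset.range (L + 1), tI L a m k = 0 := by
    intro k hk
    simp only [Finset.mem_range] at hk
    apply Finset.sum_eq_zero
    intro m _
    exact tI_zero_left L a m k (by positivity) (Or.inr (by omega))
  rw [finsum_eq_sum_of_support_subset _
    (fun k hk => by
      simp only [Function.mem_support] at hk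
      by_contra hc
      exact hk (hsupp k hc))]
  rw [Finset.sum_comm]
  rw [Finset.sum_congr rfl (fun m _ => stepC L a m)]
  rw [← sum_Icc_int L (fun m => ∑ s ∈ Finset.Icc (0:ℤ) (L:ℤ), fI L a s m)]
  rw [Finset.sum_comm]
  rw [Finset.sum_congr rfl (fun s hs => stepE L a s
      (by simp only [Finset.mem_Icc] at hs; omega) (by simp only [Finset.mem_Icc] at hs; omega))]
  -- now the right-hand side
  rcases lt_or_ge ((L:ℤ) - 2*a - 1) 0 with hr | hr
  · rw [qbin_neg_right (T 1) hr]
    rw [Finset.sum_eq_zero]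
    · ring
    · intro s hs
      simp only [Finset.mem_Icc] at hs
      rw [qbin_of_lt qq (show (L:ℤ) < s + 2*a + 1 from by omega)]
      ring
  · have hV := gVanq L L ((L:ℤ) - 2*a - 1) ((L:ℤ) - 2*a - 1) (Or.inr le_rfl)
    rw [show (2 * (L:ℤ)) = (L:ℤ) + (L:ℤ) from by ring]
    rw [hV, Finset.mul_sum]
    rw [sum_Icc_reflect ((L:ℤ) - 2*a - 1)
      (fun m => T (2 * a ^ 2 + 2 * a) * (T (((L:ℤ) - m) * (((L:ℤ) - 2*a - 1) - m))
        * qbin qq L m * qbin qq L (((L:ℤ) - 2*a - 1) - m)))]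
    have hterm2 : ∀ j ∈ Finset.Icc (0:ℤ) ((L:ℤ) - 2*a - 1),
        T (2 * a ^ 2 + 2 * a) * (T (((L:ℤ) - (((L:ℤ) - 2*a - 1) - j))
              * (((L:ℤ) - 2*a - 1) - (((L:ℤ) - 2*a - 1) - j)))
            * qbin qq L (((L:ℤ) - 2*a - 1) - j)
            * qbin qq L (((L:ℤ) - 2*a - 1) - (((L:ℤ) - 2*a - 1) - j)))
        = T (j*(j+2*a+1) + 2*a*a + 2*a) * (qbin qq L j * qbin qq L (j+2*a+1)) := by
      intro j _
      rw [show ((L:ℤ) - 2*a - 1) - (((L:ℤ) - 2*a - 1) - j) = j from by ring]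
      rw [qbin_symm L (((L:ℤ) - 2*a - 1) - j) (j+2*a+1) (by ring)]
      have tm : (T (2 * a ^ 2 + 2 * a) : LaurentPolynomial ℤ)
          * T (((L:ℤ) - (((L:ℤ) - 2*a - 1) - j)) * j)
          = T (j*(j+2*a+1) + 2*a*a + 2*a) := Tmul' _ _ _ (by ring)
      linear_combination (qbin qq L (j+2*a+1) * qbin qq L j) * tm
    rw [Finset.sum_congr rfl hterm2]
    rw [sum_Icc_ext (L:ℤ) ((L:ℤ) - 2*a - 1)
      (fun j => T (j*(j+2*a+1) + 2*a*a + 2*a) * (qbin qq L j * qbin qq L (j+2*a+1)))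
      (fun j hj hc => by
        rcases hc with hc | hc
        · rw [qbin_of_lt qq (show (L:ℤ) < j + 2*a + 1 from by omega)]
          ring
        · rw [qbin_of_lt qq (show (L:ℤ) < j from hc)]
          ring)]

end Aux

theorem stmt18 (L : ℕ) (a : ℤ) :
    (∑ᶠ k : ℕ,
        (∑ m ∈ Finset.range (L + 1),
            T (((m : ℤ) + k) * ((m : ℤ) + k + 1) + (k : ℤ) * ((k : ℤ) + 1)) *
              qbin (T 1) L m * qbin (T 1) ((L : ℤ) - m) (2 * k + 1)) *
          qbin (T 1) (2 * (k : ℤ) + 1) ((k : ℤ) - a)) =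
      T (2 * a ^ 2 + 2 * a) * qbin (T 1) (2 * L) ((L : ℤ) - 2 * a - 1) :=
  Aux.main L a
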